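/- Let H be a finite-dimensional Hopf algebra with bijective antipode S. For all h, t ∈ H and α ∈ H*, ((h ⇁' S(h') ) compatibility): α₂ ⇁' S(h₁) ⊗ α₁ ⇁' h₂ = ⟨α, 1⟩ S(h₁) ⊗ h₂ in H ⊗ H, where α ⇁' u = ⟨α, S⁻¹(u₁)⟩ u₂. -/

import Mathlib

open TensorProduct Coalgebra

namespace Stmt10Aux
variable {k H : Type*} [CommRing k] [Ring H] [HopfAlgebra k H]

local notation "𝒮" => (HopfAlgebra.antipode (R := k) (A := H))

/-- counit collapse on the left slot -/
lemma sum_eps_right (h : H) {ι : Type*} (s : Finset ι) (u v : ι → H)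
    (heq : Coalgebra.comul (R := k) h = ∑ i ∈ s, u i ⊗ₜ[k] v i) :
    ∑ i ∈ s, Coalgebra.counit (R := k) (u i) • v i = h := by
  have h1 : (Coalgebra.counit (R := k) (A := H)).rTensor H (Coalgebra.comul h)
      = (1:k) ⊗ₜ[k] h := Coalgebra.rTensor_counit_comul h
  rw [heq, map_sum] at h1
  simp only [LinearMap.rTensor_tmul] at h1
  have h2 := congrArg (TensorProduct.lid k H) h1
  simpa [map_sum] using h2

/-- counit collapse on the right slot -/
lemma sum_eps_left (h : H) {ι : Type*} (s : Finset ι) (u v : ι → H)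
    (heq : Coalgebra.comul (R := k) h = ∑ i ∈ s, u i ⊗ₜ[k] v i) :
    ∑ i ∈ s, Coalgebra.counit (R := k) (v i) • u i = h := by
  have h1 : (Coalgebra.counit (R := k) (A := H)).lTensor H (Coalgebra.comul h)
      = h ⊗ₜ[k] (1:k) := Coalgebra.lTensor_counit_comul h
  rw [heq, map_sum] at h1
  simp only [LinearMap.lTensor_tmul] at h1
  have h2 := congrArg (TensorProduct.rid k H) h1
  simpa [map_sum] using h2

lemma sum_S_mul (h : H) {ι : Type*} (s : Finset ι) (u v : ι → H)
    (heq : Coalgebra.comul (R := k) h = ∑ i ∈ s, u i ⊗ₜ[k] v i) :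
    ∑ i ∈ s, 𝒮 (u i) * v i = Coalgebra.counit (R := k) h • 1 := by
  have h1 := HopfAlgebra.mul_antipode_rTensor_comul_apply (R := k) h
  rw [heq, map_sum, map_sum] at h1
  simp only [LinearMap.rTensor_tmul, LinearMap.mul'_apply] at h1
  rw [h1, Algebra.algebraMap_eq_smul_one]

lemma sum_mul_S (h : H) {ι : Type*} (s : Finset ι) (u v : ι → H)
    (heq : Coalgebra.comul (R := k) h = ∑ i ∈ s, u i ⊗ₜ[k] v i) :
    ∑ i ∈ s, u i * 𝒮 (v i) = Coalgebra.counit (R := k) h • 1 := by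
  have h1 := HopfAlgebra.mul_antipode_lTensor_comul_apply (R := k) h
  rw [heq, map_sum, map_sum] at h1
  simp only [LinearMap.lTensor_tmul, LinearMap.mul'_apply] at h1
  rw [h1, Algebra.algebraMap_eq_smul_one]

/-- global coassociativity with explicit sums, bracketing `x ⊗ (y ⊗ z)` -/
lemma coassoc_sums (h : H) {ι : Type*} (s : Finset ι) (u v : ι → H)
    (heq : Coalgebra.comul (R := k) h = ∑ i ∈ s, u i ⊗ₜ[k] v i)
    (r1 : ∀ i, Coalgebra.Repr k (u i) (H × H)) (r2 : ∀ i, Coalgebra.Repr k (v i) (H × H)) :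
    ∑ i ∈ s, ∑ p ∈ (r1 i).index,
        (r1 i).left p ⊗ₜ[k] ((r1 i).right p ⊗ₜ[k] v i)
      = ∑ i ∈ s, ∑ q ∈ (r2 i).index,
        u i ⊗ₜ[k] ((r2 i).left q ⊗ₜ[k] (r2 i).right q) := by
  have h1 := Coalgebra.coassoc_apply (R := k) h
  rw [heq] at h1
  simp only [map_sum, LinearMap.rTensor_tmul, LinearMap.lTensor_tmul] at h1
  calc ∑ i ∈ s, ∑ p ∈ (r1 i).index,
        (r1 i).left p ⊗ₜ[k] ((r1 i).right p ⊗ₜ[k] v i)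
      = ∑ i ∈ s, (TensorProduct.assoc k H H H)
          ((Coalgebra.comul (u i)) ⊗ₜ[k] v i) := by
        refine Finset.sum_congr rfl fun i _ => ?_
        rw [← (r1 i).eq, sum_tmul, map_sum]
        simp [TensorProduct.assoc_tmul]
    _ = ∑ i ∈ s, u i ⊗ₜ[k] (Coalgebra.comul (v i)) := h1
    _ = _ := by
        refine Finset.sum_congr rfl fun i _ => ?_
        rw [← (r2 i).eq, tmul_sum]

/-- global coassociativity with explicit sums, bracketing `(x ⊗ y) ⊗ z` -/
lemma coassoc_sums' (h : H) {ι : Type*} (s : Finset ι) (u v : ι → H)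
    (heq : Coalgebra.comul (R := k) h = ∑ i ∈ s, u i ⊗ₜ[k] v i)
    (r1 : ∀ i, Coalgebra.Repr k (u i) (H × H)) (r2 : ∀ i, Coalgebra.Repr k (v i) (H × H)) :
    ∑ i ∈ s, ∑ p ∈ (r1 i).index,
        ((r1 i).left p ⊗ₜ[k] (r1 i).right p) ⊗ₜ[k] v i
      = ∑ i ∈ s, ∑ q ∈ (r2 i).index,
        (u i ⊗ₜ[k] (r2 i).left q) ⊗ₜ[k] (r2 i).right q := by
  have h1 := coassoc_sums h s u v heq r1 r2
  have h2 := congrArg (TensorProduct.assoc k H H H).symm h1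
  rw [map_sum, map_sum] at h2
  simpa [map_sum, TensorProduct.assoc_symm_tmul] using h2

end Stmt10Aux

open TensorProduct Coalgebra

namespace Stmt10Aux
variable {k H : Type*} [CommRing k] [Ring H] [HopfAlgebra k H]

local notation "𝒮" => (HopfAlgebra.antipode (R := k) (A := H))

lemma S_one : 𝒮 (1:H) = 1 := by
  have h1 := HopfAlgebra.mul_antipode_rTensor_comul_apply (R := k) (1:H)
  rw [Bialgebra.comul_one, Algebra.TensorProduct.one_def] at h1
  simpa using h1

/-- key triple-collapse: `∑ (S h₁ * h₂) ⊗ h₃ = 1 ⊗ h` -/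
lemma Tlem (h : H) {ι : Type*} (s : Finset ι) (u v : ι → H)
    (heq : Coalgebra.comul (R := k) h = ∑ i ∈ s, u i ⊗ₜ[k] v i)
    (r2 : ∀ i, Coalgebra.Repr k (v i) (H × H)) :
    ∑ i ∈ s, ∑ q ∈ (r2 i).index,
      (𝒮 (u i) * (r2 i).left q) ⊗ₜ[k] (r2 i).right q = 1 ⊗ₜ[k] h := by
  set Q : (H ⊗[k] H) ⊗[k] H →ₗ[k] H ⊗[k] H :=
    (LinearMap.mul' k H ∘ₗ (𝒮).rTensor H).rTensor H with hQ
  have hQt : ∀ x y z : H, Q ((x ⊗ₜ[k] y) ⊗ₜ[k] z) = (𝒮 x * y) ⊗ₜ[k] z := by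
    intro x y z; simp [hQ]
  have h1 := coassoc_sums' h s u v heq (fun i => ℛ k (u i)) r2
  have h2 := congrArg Q h1
  rw [map_sum, map_sum] at h2
  simp only [map_sum, hQt] at h2
  have h3 : ∀ i ∈ s, ∑ p ∈ (ℛ k (u i)).index,
      (𝒮 ((ℛ k (u i)).left p) * (ℛ k (u i)).right p) ⊗ₜ[k] v i
      = (Coalgebra.counit (R := k) (u i) • (1:H)) ⊗ₜ[k] v i := by
    intro i _
    rw [← sum_tmul]
    congr 1
    exact sum_S_mul (u i) _ _ _ ((ℛ k (u i)).eq.symm)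
  rw [Finset.sum_congr rfl h3] at h2
  rw [← h2]
  have : ∑ i ∈ s, (Coalgebra.counit (R := k) (u i) • (1:H)) ⊗ₜ[k] v i
      = (1:H) ⊗ₜ[k] ∑ i ∈ s, Coalgebra.counit (R := k) (u i) • v i := by
    rw [tmul_sum]
    refine Finset.sum_congr rfl fun i _ => ?_
    rw [smul_tmul, tmul_smul]
  rw [this, sum_eps_right h s u v heq]

/-- antipode is anti-multiplicative -/
lemma S_mul (a b : H) : 𝒮 (a * b) = 𝒮 b * 𝒮 a := by
  classical
  set ra := ℛ k a with hra
  set rb := ℛ k b with hrb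
  set raa : ∀ i : H × H, Coalgebra.Repr k (ra.right i) (H × H) := fun i => ℛ k (ra.right i) with hraa
  set rbb : ∀ j : H × H, Coalgebra.Repr k (rb.right j) (H × H) := fun j => ℛ k (rb.right j) with hrbb
  set X : H := ∑ i ∈ ra.index, ∑ j ∈ rb.index, ∑ p ∈ (raa i).index,
      ∑ q ∈ (rbb j).index,
      𝒮 (rb.left j) * (𝒮 (ra.left i) *
        (((raa i).left p * (rbb j).left q) *
          𝒮 ((raa i).right p * (rbb j).right q))) with hX
  have hSb : (∑ j ∈ rb.index, Coalgebra.counit (R := k) (rb.right j) • 𝒮 (rb.left j))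
      = 𝒮 b := by
    calc ∑ j ∈ rb.index, Coalgebra.counit (R := k) (rb.right j) • 𝒮 (rb.left j)
        = 𝒮 (∑ j ∈ rb.index, Coalgebra.counit (R := k) (rb.right j) • rb.left j) := by
          rw [map_sum]; simp
      _ = 𝒮 b := by rw [sum_eps_left b rb.index rb.left rb.right rb.eq.symm]
  have hSa : (∑ i ∈ ra.index, Coalgebra.counit (R := k) (ra.right i) • 𝒮 (ra.left i))
      = 𝒮 a := by
    calc ∑ i ∈ ra.index, Coalgebra.counit (R := k) (ra.right i) • 𝒮 (ra.left i)
        = 𝒮 (∑ i ∈ ra.index, Coalgebra.counit (R := k) (ra.right i) • ra.left i) := by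
          rw [map_sum]; simp
      _ = 𝒮 a := by rw [sum_eps_left a ra.index ra.left ra.right ra.eq.symm]
  have dir2 : X = 𝒮 b * 𝒮 a := by
    have inner : ∀ i ∈ ra.index, ∀ j ∈ rb.index,
        ∑ p ∈ (raa i).index, ∑ q ∈ (rbb j).index,
          (((raa i).left p * (rbb j).left q) *
            𝒮 ((raa i).right p * (rbb j).right q))
        = (Coalgebra.counit (R := k) (ra.right i) *
            Coalgebra.counit (R := k) (rb.right j)) • 1 := by
      intro i _ j _
      have hc : Coalgebra.comul (R := k) (ra.right i * rb.right j)
          = ∑ pq ∈ (raa i).index ×ˢ (rbb j).index,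
            ((raa i).left pq.1 * (rbb j).left pq.2) ⊗ₜ[k]
              ((raa i).right pq.1 * (rbb j).right pq.2) := by
        rw [Bialgebra.comul_mul, ← (raa i).eq, ← (rbb j).eq, Finset.sum_mul_sum]
        rw [Finset.sum_product]
        simp [Algebra.TensorProduct.tmul_mul_tmul]
      have h5 := sum_mul_S (ra.right i * rb.right j)
        ((raa i).index ×ˢ (rbb j).index)
        (fun pq => (raa i).left pq.1 * (rbb j).left pq.2)
        (fun pq => (raa i).right pq.1 * (rbb j).right pq.2) hc
      rw [Finset.sum_product] at h5
      rw [h5, Bialgebra.counit_mul]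
    calc X = ∑ i ∈ ra.index, ∑ j ∈ rb.index, 𝒮 (rb.left j) * (𝒮 (ra.left i) *
          ((Coalgebra.counit (R := k) (ra.right i) *
            Coalgebra.counit (R := k) (rb.right j)) • 1)) := by
          rw [hX]
          refine Finset.sum_congr rfl fun i hi => Finset.sum_congr rfl fun j hj => ?_
          rw [← inner i hi j hj]
          simp only [Finset.mul_sum]
      _ = ∑ i ∈ ra.index, ∑ j ∈ rb.index,
            (Coalgebra.counit (R := k) (rb.right j) • 𝒮 (rb.left j)) *
            (Coalgebra.counit (R := k) (ra.right i) • 𝒮 (ra.left i)) := by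
          refine Finset.sum_congr rfl fun i _ => Finset.sum_congr rfl fun j _ => ?_
          simp only [smul_mul_assoc, mul_smul_comm, mul_one, smul_smul]
      _ = (∑ j ∈ rb.index, Coalgebra.counit (R := k) (rb.right j) • 𝒮 (rb.left j)) *
          (∑ i ∈ ra.index, Coalgebra.counit (R := k) (ra.right i) • 𝒮 (ra.left i)) := by
          rw [Finset.sum_mul]
          rw [Finset.sum_comm]
          refine Finset.sum_congr rfl fun i _ => ?_
          rw [Finset.mul_sum]
      _ = 𝒮 b * 𝒮 a := by rw [hSb, hSa]
  have Ta := Tlem a ra.index ra.left ra.right ra.eq.symm raa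
  have Tb := Tlem b rb.index rb.left rb.right rb.eq.symm rbb
  have stepB : X = ∑ j ∈ rb.index, ∑ q ∈ (rbb j).index,
      𝒮 (rb.left j) * ((rbb j).left q * 𝒮 (a * (rbb j).right q)) := by
    have reorder : X = ∑ j ∈ rb.index, ∑ q ∈ (rbb j).index,
        ∑ i ∈ ra.index, ∑ p ∈ (raa i).index,
        𝒮 (rb.left j) * (𝒮 (ra.left i) *
          (((raa i).left p * (rbb j).left q) *
            𝒮 ((raa i).right p * (rbb j).right q))) := by
      rw [hX, Finset.sum_comm]
      refine Finset.sum_congr rfl fun j _ => ?_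
      have e1 : ∀ i ∈ ra.index, ∑ p ∈ (raa i).index, ∑ q ∈ (rbb j).index,
          𝒮 (rb.left j) * (𝒮 (ra.left i) *
            (((raa i).left p * (rbb j).left q) *
              𝒮 ((raa i).right p * (rbb j).right q)))
          = ∑ q ∈ (rbb j).index, ∑ p ∈ (raa i).index,
          𝒮 (rb.left j) * (𝒮 (ra.left i) *
            (((raa i).left p * (rbb j).left q) *
              𝒮 ((raa i).right p * (rbb j).right q))) := by
        intro i _; exact Finset.sum_comm
      rw [Finset.sum_congr rfl e1, Finset.sum_comm]
    rw [reorder]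
    refine Finset.sum_congr rfl fun j _ => Finset.sum_congr rfl fun q _ => ?_
    set Ψ : H ⊗[k] H →ₗ[k] H :=
      LinearMap.mulLeft k (𝒮 (rb.left j)) ∘ₗ LinearMap.mul' k H ∘ₗ
        LinearMap.lTensor H (LinearMap.mulLeft k ((rbb j).left q) ∘ₗ
          (HopfAlgebra.antipode (R := k) (A := H)) ∘ₗ
            LinearMap.mulRight k ((rbb j).right q)) with hΨ
    have hΨt : ∀ u z : H, Ψ (u ⊗ₜ[k] z)
        = 𝒮 (rb.left j) * (u * ((rbb j).left q * 𝒮 (z * (rbb j).right q))) := by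
      intro u z; simp [hΨ]
    have happ := congrArg Ψ Ta
    rw [map_sum] at happ
    simp only [map_sum, hΨt] at happ
    calc ∑ i ∈ ra.index, ∑ p ∈ (raa i).index,
          𝒮 (rb.left j) * (𝒮 (ra.left i) *
            (((raa i).left p * (rbb j).left q) *
              𝒮 ((raa i).right p * (rbb j).right q)))
        = ∑ i ∈ ra.index, ∑ p ∈ (raa i).index,
          𝒮 (rb.left j) * ((𝒮 (ra.left i) * (raa i).left p) *
            ((rbb j).left q * 𝒮 ((raa i).right p * (rbb j).right q))) := by
          refine Finset.sum_congr rfl fun i _ => Finset.sum_congr rfl fun p _ => ?_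
          simp only [mul_assoc]
      _ = Ψ ((1:H) ⊗ₜ[k] a) := happ
      _ = 𝒮 (rb.left j) * ((rbb j).left q * 𝒮 (a * (rbb j).right q)) := by
          rw [hΨt]; rw [one_mul]
  have dir1 : X = 𝒮 (a * b) := by
    set χ : H ⊗[k] H →ₗ[k] H :=
      LinearMap.mul' k H ∘ₗ LinearMap.lTensor H
        ((HopfAlgebra.antipode (R := k) (A := H)) ∘ₗ LinearMap.mulLeft k a) with hχ
    have hχt : ∀ u z : H, χ (u ⊗ₜ[k] z) = u * 𝒮 (a * z) := by
      intro u z; simp [hχ]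
    have happ := congrArg χ Tb
    rw [map_sum] at happ
    simp only [map_sum, hχt] at happ
    calc X = ∑ j ∈ rb.index, ∑ q ∈ (rbb j).index,
          (𝒮 (rb.left j) * (rbb j).left q) * 𝒮 (a * (rbb j).right q) := by
          rw [stepB]
          refine Finset.sum_congr rfl fun j _ => Finset.sum_congr rfl fun q _ => ?_
          rw [mul_assoc]
      _ = χ ((1:H) ⊗ₜ[k] b) := happ
      _ = 𝒮 (a * b) := by rw [hχt, one_mul]
  rw [← dir1, dir2]

end Stmt10Aux

open TensorProduct Coalgebra

namespace Stmt10Aux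
variable {k H : Type*} [CommRing k] [Ring H] [HopfAlgebra k H]

local notation "𝒮" => (HopfAlgebra.antipode (R := k) (A := H))

section Conv
variable (A : Type*) [Ring A] [Algebra k A]

/-- convolution product on `Hom(H, A)` -/
noncomputable def conv (f g : H →ₗ[k] A) : H →ₗ[k] A :=
  LinearMap.mul' k A ∘ₗ TensorProduct.map f g ∘ₗ Coalgebra.comul

/-- convolution unit -/
noncomputable def convOne : H →ₗ[k] A :=
  Algebra.linearMap k A ∘ₗ Coalgebra.counit

variable {A}

lemma conv_apply_sum (f g : H →ₗ[k] A) (h : H) {ι : Type*} (s : Finset ι) (u v : ι → H)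
    (heq : Coalgebra.comul (R := k) h = ∑ i ∈ s, u i ⊗ₜ[k] v i) :
    conv A f g h = ∑ i ∈ s, f (u i) * g (v i) := by
  simp only [conv, LinearMap.coe_comp, Function.comp_apply, heq, map_sum, _root_.TensorProduct.map_tmul,
    LinearMap.mul'_apply]

lemma conv_assoc (f g j : H →ₗ[k] A) : conv A (conv A f g) j = conv A f (conv A g j) := by
  apply LinearMap.ext; intro c
  set rc := ℛ k c with hrc
  set r1 : ∀ i : H × H, Coalgebra.Repr k (rc.left i) (H × H) := fun i => ℛ k (rc.left i) with hr1
  set r2 : ∀ i : H × H, Coalgebra.Repr k (rc.right i) (H × H) := fun i => ℛ k (rc.right i) with hr2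
  have key := coassoc_sums c rc.index rc.left rc.right rc.eq.symm r1 r2
  set Λ : H ⊗[k] (H ⊗[k] H) →ₗ[k] A :=
    LinearMap.mul' k A ∘ₗ LinearMap.lTensor A (LinearMap.mul' k A) ∘ₗ
      TensorProduct.map f (TensorProduct.map g j) with hΛ
  have hΛt : ∀ x y z : H, Λ (x ⊗ₜ[k] (y ⊗ₜ[k] z)) = f x * (g y * j z) := by
    intro x y z; simp [hΛ]
  have happ := congrArg Λ key
  simp only [map_sum, hΛt] at happ
  calc conv A (conv A f g) j c
      = ∑ i ∈ rc.index, (conv A f g) (rc.left i) * j (rc.right i) :=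
        conv_apply_sum _ _ c rc.index rc.left rc.right rc.eq.symm
    _ = ∑ i ∈ rc.index, ∑ p ∈ (r1 i).index,
          f ((r1 i).left p) * (g ((r1 i).right p) * j (rc.right i)) := by
        refine Finset.sum_congr rfl fun i _ => ?_
        rw [conv_apply_sum f g (rc.left i) (r1 i).index (r1 i).left (r1 i).right
          (r1 i).eq.symm, Finset.sum_mul]
        exact Finset.sum_congr rfl fun p _ => by rw [mul_assoc]
    _ = ∑ i ∈ rc.index, ∑ q ∈ (r2 i).index,
          f (rc.left i) * (g ((r2 i).left q) * j ((r2 i).right q)) := happ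
    _ = ∑ i ∈ rc.index, f (rc.left i) * (conv A g j) (rc.right i) := by
        refine Finset.sum_congr rfl fun i _ => ?_
        rw [conv_apply_sum g j (rc.right i) (r2 i).index (r2 i).left (r2 i).right
          (r2 i).eq.symm, Finset.mul_sum]
    _ = conv A f (conv A g j) c :=
        (conv_apply_sum _ _ c rc.index rc.left rc.right rc.eq.symm).symm

lemma conv_one (f : H →ₗ[k] A) : conv A f (convOne A) = f := by
  apply LinearMap.ext; intro c
  set rc := ℛ k c with hrc
  rw [conv_apply_sum f (convOne A) c rc.index rc.left rc.right rc.eq.symm]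
  calc ∑ i ∈ rc.index, f (rc.left i) * (convOne A) (rc.right i)
      = ∑ i ∈ rc.index, Coalgebra.counit (R := k) (rc.right i) • f (rc.left i) := by
        refine Finset.sum_congr rfl fun i _ => ?_
        simp [convOne, Algebra.algebraMap_eq_smul_one]
    _ = f (∑ i ∈ rc.index, Coalgebra.counit (R := k) (rc.right i) • rc.left i) := by
        rw [map_sum]; simp
    _ = f c := by rw [sum_eps_left c rc.index rc.left rc.right rc.eq.symm]

lemma one_conv (f : H →ₗ[k] A) : conv A (convOne A) f = f := by
  apply LinearMap.ext; intro c
  set rc := ℛ k c with hrc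
  rw [conv_apply_sum (convOne A) f c rc.index rc.left rc.right rc.eq.symm]
  calc ∑ i ∈ rc.index, (convOne A) (rc.left i) * f (rc.right i)
      = ∑ i ∈ rc.index, Coalgebra.counit (R := k) (rc.left i) • f (rc.right i) := by
        refine Finset.sum_congr rfl fun i _ => ?_
        simp [convOne, Algebra.algebraMap_eq_smul_one]
    _ = f (∑ i ∈ rc.index, Coalgebra.counit (R := k) (rc.left i) • rc.right i) := by
        rw [map_sum]; simp
    _ = f c := by rw [sum_eps_right c rc.index rc.left rc.right rc.eq.symm]

lemma conv_sandwich {f g L : H →ₗ[k] A} (hfL : conv A f L = convOne A)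
    (hLg : conv A L g = convOne A) : f = g := by
  have h1 : conv A f (conv A L g) = conv A f (convOne A) := by rw [hLg]
  rw [conv_one, ← conv_assoc, hfL, one_conv] at h1
  exact h1.symm

end Conv
end Stmt10Aux

open TensorProduct Coalgebra

namespace Stmt10Aux
variable {k H : Type*} [CommRing k] [Ring H] [HopfAlgebra k H]

local notation "𝒮" => (HopfAlgebra.antipode (R := k) (A := H))

/-- evaluation of `comm ∘ (S ⊗ S) ∘ comul` on explicit sums -/
lemma g_eval (c : H) {ι : Type*} (s : Finset ι) (u v : ι → H)
    (hc : Coalgebra.comul (R := k) c = ∑ i ∈ s, u i ⊗ₜ[k] v i) :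
    ((TensorProduct.comm k H H).toLinearMap ∘ₗ TensorProduct.map 𝒮 𝒮 ∘ₗ
      (Coalgebra.comul (R := k))) c = ∑ i ∈ s, 𝒮 (v i) ⊗ₜ[k] 𝒮 (u i) := by
  simp only [LinearMap.coe_comp, LinearEquiv.coe_coe, Function.comp_apply, hc, map_sum,
    _root_.TensorProduct.map_tmul, _root_.TensorProduct.comm_tmul]

/-- evaluation of `assoc⁻¹ ∘ (id ⊗ comul)` on explicit sums -/
lemma psi_eval (y z : H) {ι' : Type*} (s' : Finset ι') (l r : ι' → H)
    (hz : Coalgebra.comul (R := k) z = ∑ t ∈ s', l t ⊗ₜ[k] r t) :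
    ((TensorProduct.assoc k H H H).symm.toLinearMap ∘ₗ
      LinearMap.lTensor H (Coalgebra.comul (R := k))) (y ⊗ₜ[k] z)
      = ∑ t ∈ s', (y ⊗ₜ[k] l t) ⊗ₜ[k] r t := by
  simp only [LinearMap.coe_comp, LinearEquiv.coe_coe, Function.comp_apply,
    LinearMap.lTensor_tmul, hz, tmul_sum, map_sum, _root_.TensorProduct.assoc_symm_tmul]

/-- the antipode is an anti-coalgebra map -/
lemma comul_S (a : H) :
    Coalgebra.comul (R := k) (𝒮 a)
      = (TensorProduct.comm k H H) (TensorProduct.map 𝒮 𝒮 (Coalgebra.comul a)) := by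
  set f : H →ₗ[k] H ⊗[k] H := Coalgebra.comul ∘ₗ 𝒮 with hf
  set g : H →ₗ[k] H ⊗[k] H :=
    (TensorProduct.comm k H H).toLinearMap ∘ₗ TensorProduct.map 𝒮 𝒮 ∘ₗ Coalgebra.comul with hg
  set L : H →ₗ[k] H ⊗[k] H := Coalgebra.comul with hL
  have hfL : conv (H ⊗[k] H) f L = convOne (H ⊗[k] H) := by
    apply LinearMap.ext; intro c
    set rc := ℛ k c with hrc
    rw [conv_apply_sum f L c rc.index rc.left rc.right rc.eq.symm]
    have e1 : ∀ i ∈ rc.index, f (rc.left i) * L (rc.right i)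
        = Coalgebra.comul (R := k) (𝒮 (rc.left i) * rc.right i) := by
      intro i _
      simp only [hf, hL, LinearMap.coe_comp, Function.comp_apply]
      rw [Bialgebra.comul_mul]
    rw [Finset.sum_congr rfl e1, ← map_sum,
      sum_S_mul c rc.index rc.left rc.right rc.eq.symm, map_smul]
    rw [Bialgebra.comul_one]
    simp [convOne, Algebra.algebraMap_eq_smul_one]
  have hLg : conv (H ⊗[k] H) L g = convOne (H ⊗[k] H) := by
    apply LinearMap.ext; intro c
    set rc := ℛ k c with hrc
    set rv : ∀ i : H × H, Coalgebra.Repr k (rc.right i) (H × H) := fun i => ℛ k (rc.right i) with hrv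
    set ru : ∀ i : H × H, Coalgebra.Repr k (rc.left i) (H × H) := fun i => ℛ k (rc.left i) with hru
    -- the shuffle map
    set P₂ : H ⊗[k] ((H ⊗[k] H) ⊗[k] H) →ₗ[k] H ⊗[k] H :=
      TensorProduct.map (LinearMap.mul' k H) (LinearMap.mul' k H) ∘ₗ
        (TensorProduct.assoc k H H (H ⊗[k] H)).symm.toLinearMap ∘ₗ
          LinearMap.lTensor H ((TensorProduct.comm k (H ⊗[k] H) H).toLinearMap) ∘ₗ
            LinearMap.lTensor H
              (TensorProduct.map (LinearMap.lTensor H 𝒮) 𝒮) with hP₂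
    have hP₂t : ∀ x y z w : H, P₂ (x ⊗ₜ[k] ((y ⊗ₜ[k] z) ⊗ₜ[k] w))
        = (x * 𝒮 w) ⊗ₜ[k] (y * 𝒮 z) := by
      intro x y z w; simp [hP₂]
    -- step 1 : conv L g c as a quadruple sum
    have step1 : conv (H ⊗[k] H) L g c
        = ∑ i ∈ rc.index, ∑ p ∈ (ru i).index, ∑ q ∈ (rv i).index,
          P₂ ((ru i).left p ⊗ₜ[k] (((ru i).right p ⊗ₜ[k] (rv i).left q) ⊗ₜ[k]
            (rv i).right q)) := by
      rw [conv_apply_sum L g c rc.index rc.left rc.right rc.eq.symm]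
      refine Finset.sum_congr rfl fun i _ => ?_
      have hgi : g (rc.right i) = ∑ q ∈ (rv i).index, 𝒮 ((rv i).right q) ⊗ₜ[k] 𝒮 ((rv i).left q) :=
        g_eval (rc.right i) (rv i).index (rv i).left (rv i).right (rv i).eq.symm
      rw [hgi]
      have : L (rc.left i) = ∑ p ∈ (ru i).index, (ru i).left p ⊗ₜ[k] (ru i).right p :=
        (ru i).eq.symm
      rw [this, Finset.sum_mul_sum]
      refine Finset.sum_congr rfl fun p _ => Finset.sum_congr rfl fun q _ => ?_
      rw [Algebra.TensorProduct.tmul_mul_tmul, hP₂t]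
    -- step 2 : transport along global coassociativity
    have key := coassoc_sums c rc.index rc.left rc.right rc.eq.symm ru rv
    set ψ : H ⊗[k] H →ₗ[k] (H ⊗[k] H) ⊗[k] H :=
      (TensorProduct.assoc k H H H).symm.toLinearMap ∘ₗ
        LinearMap.lTensor H (Coalgebra.comul (R := k)) with hψ
    have hψt : ∀ y z : H, ψ (y ⊗ₜ[k] z)
        = ((TensorProduct.assoc k H H H).symm.toLinearMap ∘ₗ
          LinearMap.lTensor H (Coalgebra.comul (R := k))) (y ⊗ₜ[k] z) := fun _ _ => by
      rw [hψ]
    have happ := congrArg (P₂ ∘ₗ LinearMap.lTensor H ψ) key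
    simp only [map_sum, LinearMap.coe_comp, Function.comp_apply, LinearMap.lTensor_tmul] at happ
    -- LHS of happ equals step1's RHS
    have hleft : ∑ i ∈ rc.index, ∑ p ∈ (ru i).index,
        P₂ ((ru i).left p ⊗ₜ[k] ψ ((ru i).right p ⊗ₜ[k] rc.right i))
        = ∑ i ∈ rc.index, ∑ p ∈ (ru i).index, ∑ q ∈ (rv i).index,
          P₂ ((ru i).left p ⊗ₜ[k] (((ru i).right p ⊗ₜ[k] (rv i).left q) ⊗ₜ[k]
            (rv i).right q)) := by
      refine Finset.sum_congr rfl fun i _ => Finset.sum_congr rfl fun p _ => ?_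
      rw [hψt, psi_eval ((ru i).right p) (rc.right i) (rv i).index (rv i).left (rv i).right
        (rv i).eq.symm, tmul_sum, map_sum]
    -- evaluate the RHS of happ
    have hright : ∑ i ∈ rc.index, ∑ q ∈ (rv i).index,
        P₂ (rc.left i ⊗ₜ[k] ψ ((rv i).left q ⊗ₜ[k] (rv i).right q))
        = Coalgebra.counit (R := k) c • (1 : H ⊗[k] H) := by
      have e2 : ∀ i ∈ rc.index, ∑ q ∈ (rv i).index,
          P₂ (rc.left i ⊗ₜ[k] ψ ((rv i).left q ⊗ₜ[k] (rv i).right q))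
          = (rc.left i * 𝒮 (rc.right i)) ⊗ₜ[k] (1:H) := by
        intro i _
        set rr : ∀ q : H × H, Coalgebra.Repr k ((rv i).left q) (H × H) :=
          fun q => ℛ k ((rv i).left q) with hrr
        set rr2 : ∀ q : H × H, Coalgebra.Repr k ((rv i).right q) (H × H) :=
          fun q => ℛ k ((rv i).right q) with hrr2
        have inner_coassoc := coassoc_sums' (rc.right i) (rv i).index (rv i).left
          (rv i).right (rv i).eq.symm rr rr2
        calc ∑ q ∈ (rv i).index,
              P₂ (rc.left i ⊗ₜ[k] ψ ((rv i).left q ⊗ₜ[k] (rv i).right q))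
            = ∑ q ∈ (rv i).index, ∑ t ∈ (rr2 q).index,
              P₂ (rc.left i ⊗ₜ[k] (((rv i).left q ⊗ₜ[k] (rr2 q).left t) ⊗ₜ[k]
                (rr2 q).right t)) := by
              refine Finset.sum_congr rfl fun q _ => ?_
              rw [hψt, psi_eval ((rv i).left q) ((rv i).right q) (rr2 q).index (rr2 q).left
                (rr2 q).right (rr2 q).eq.symm, tmul_sum, map_sum]
          _ = ∑ q ∈ (rv i).index, ∑ t ∈ (rr q).index,
              P₂ (rc.left i ⊗ₜ[k] (((rr q).left t ⊗ₜ[k] (rr q).right t) ⊗ₜ[k]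
                (rv i).right q)) := by
              have fA : P₂ (rc.left i ⊗ₜ[k] (∑ q ∈ (rv i).index, ∑ t ∈ (rr2 q).index,
                  ((rv i).left q ⊗ₜ[k] (rr2 q).left t) ⊗ₜ[k] (rr2 q).right t))
                  = ∑ q ∈ (rv i).index, ∑ t ∈ (rr2 q).index,
                  P₂ (rc.left i ⊗ₜ[k] (((rv i).left q ⊗ₜ[k] (rr2 q).left t) ⊗ₜ[k]
                    (rr2 q).right t)) := by
                simp only [tmul_sum, map_sum]
              have fB : P₂ (rc.left i ⊗ₜ[k] (∑ q ∈ (rv i).index, ∑ t ∈ (rr q).index,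
                  ((rr q).left t ⊗ₜ[k] (rr q).right t) ⊗ₜ[k] (rv i).right q))
                  = ∑ q ∈ (rv i).index, ∑ t ∈ (rr q).index,
                  P₂ (rc.left i ⊗ₜ[k] (((rr q).left t ⊗ₜ[k] (rr q).right t) ⊗ₜ[k]
                    (rv i).right q)) := by
                simp only [tmul_sum, map_sum]
              rw [← fA, ← fB, inner_coassoc]
          _ = ∑ q ∈ (rv i).index,
              (rc.left i * 𝒮 ((rv i).right q)) ⊗ₜ[k]
                (Coalgebra.counit (R := k) ((rv i).left q) • (1:H)) := by
              refine Finset.sum_congr rfl fun q _ => ?_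
              simp only [hP₂t]
              rw [← tmul_sum]
              congr 1
              exact sum_mul_S ((rv i).left q) (rr q).index (rr q).left (rr q).right
                (rr q).eq.symm
          _ = (rc.left i * 𝒮 (rc.right i)) ⊗ₜ[k] (1:H) := by
              have : ∀ q ∈ (rv i).index,
                  (rc.left i * 𝒮 ((rv i).right q)) ⊗ₜ[k]
                    (Coalgebra.counit (R := k) ((rv i).left q) • (1:H))
                  = (rc.left i * 𝒮 (Coalgebra.counit (R := k) ((rv i).left q) •
                      (rv i).right q)) ⊗ₜ[k] (1:H) := by
                intro q _
                rw [map_smul, mul_smul_comm, tmul_smul, smul_tmul']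
              rw [Finset.sum_congr rfl this]
              have fold : ∑ q ∈ (rv i).index,
                  (rc.left i * 𝒮 (Coalgebra.counit (R := k) ((rv i).left q) •
                      (rv i).right q)) ⊗ₜ[k] (1:H)
                  = (rc.left i * 𝒮 (∑ q ∈ (rv i).index,
                      Coalgebra.counit (R := k) ((rv i).left q) • (rv i).right q))
                      ⊗ₜ[k] (1:H) := by
                rw [map_sum, Finset.mul_sum, sum_tmul]
              rw [fold, sum_eps_right (rc.right i) (rv i).index (rv i).left (rv i).right
                (rv i).eq.symm]
      rw [Finset.sum_congr rfl e2, ← sum_tmul,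
        sum_mul_S c rc.index rc.left rc.right rc.eq.symm, ← smul_tmul',
        ← Algebra.TensorProduct.one_def]
    rw [step1, ← hleft, happ, hright]
    simp [convOne, Algebra.algebraMap_eq_smul_one]
  have := conv_sandwich hfL hLg
  exact congrFun (congrArg (fun m => m.toFun) this) a

end Stmt10Aux

open TensorProduct Coalgebra

namespace Stmt10Aux
variable {k H : Type*} [CommRing k] [Ring H] [HopfAlgebra k H]

local notation "𝒮" => (HopfAlgebra.antipode (R := k) (A := H))

variable (Sinv : H →ₗ[k] H)

lemma Sinv_one (hS1 : ∀ x : H, Sinv (𝒮 x) = x) : Sinv (1:H) = 1 := by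
  have := hS1 1
  rwa [S_one] at this

lemma Sinv_mul (hS1 : ∀ x : H, Sinv (𝒮 x) = x) (hS2 : ∀ x : H, 𝒮 (Sinv x) = x)
    (x y : H) : Sinv (x * y) = Sinv y * Sinv x := by
  have h1 : 𝒮 (Sinv y * Sinv x) = x * y := by
    rw [S_mul, hS2, hS2]
  have h2 := congrArg Sinv h1
  rw [hS1] at h2
  exact h2.symm

lemma sum_Sinv_mul (hS1 : ∀ x : H, Sinv (𝒮 x) = x) (hS2 : ∀ x : H, 𝒮 (Sinv x) = x)
    (h : H) {ι : Type*} (s : Finset ι) (u v : ι → H)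
    (heq : Coalgebra.comul (R := k) h = ∑ i ∈ s, u i ⊗ₜ[k] v i) :
    ∑ i ∈ s, Sinv (v i) * u i = Coalgebra.counit (R := k) h • 1 := by
  have h1 := sum_S_mul h s u v heq
  have h2 := congrArg Sinv h1
  rw [map_sum, map_smul, Sinv_one Sinv hS1] at h2
  calc ∑ i ∈ s, Sinv (v i) * u i
      = ∑ i ∈ s, Sinv (𝒮 (u i) * v i) := by
        refine Finset.sum_congr rfl fun i _ => ?_
        rw [Sinv_mul Sinv hS1 hS2, hS1]
    _ = Coalgebra.counit (R := k) h • 1 := h2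

end Stmt10Aux

open TensorProduct

/-- The action `⇁'` of `H*` on `H`: `α ⇁' u = ⟨α, S⁻¹(u₁)⟩ u₂`. -/
noncomputable def lAct' {k H : Type*} [CommSemiring k] [Semiring H] [HopfAlgebra k H]
    (Sinv : H →ₗ[k] H) (α : Module.Dual k H) : H →ₗ[k] H :=
  (TensorProduct.lid k H).toLinearMap ∘ₗ
    (TensorProduct.map (α ∘ₗ Sinv) LinearMap.id) ∘ₗ (Coalgebra.comul (R := k))

namespace Stmt10Aux

lemma lAct'_eval {k H : Type*} [CommRing k] [Ring H] [HopfAlgebra k H]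
    (Sinv : H →ₗ[k] H) (β : Module.Dual k H) (u : H) {ι : Type*} (s : Finset ι)
    (l r : ι → H) (hu : Coalgebra.comul (R := k) u = ∑ t ∈ s, l t ⊗ₜ[k] r t) :
    lAct' Sinv β u = ∑ t ∈ s, β (Sinv (l t)) • r t := by
  simp only [lAct', LinearMap.coe_comp, LinearEquiv.coe_coe, Function.comp_apply, hu,
    map_sum, _root_.TensorProduct.map_tmul, LinearMap.id_coe, id_eq, _root_.TensorProduct.lid_tmul, LinearMap.coe_comp,
    Function.comp_apply]

end Stmt10Aux

open Stmt10Aux Coalgebra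

/-- `α₂ ⇁' S(h₁) ⊗ α₁ ⇁' h₂ = ⟨α, 1⟩ S(h₁) ⊗ h₂` in `H ⊗ H`. -/
theorem stmt10 {k H : Type*} [Field k] [Ring H] [HopfAlgebra k H] [FiniteDimensional k H]
    (Sinv : H →ₗ[k] H)
    (hS1 : ∀ x, Sinv ((HopfAlgebra.antipode (R := k) : H →ₗ[k] H) x) = x)
    (hS2 : ∀ x, (HopfAlgebra.antipode (R := k) : H →ₗ[k] H) (Sinv x) = x)
    (h : H) (α : Module.Dual k H)
    (ι : Type) [Fintype ι] (h1 h2 : ι → H)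
    (hΔ : Coalgebra.comul (R := k) h = ∑ i, h1 i ⊗ₜ[k] h2 i)
    (κ : Type) [Fintype κ] (αA αB : κ → Module.Dual k H)
    (hΔα : ∀ x y : H, α (x * y) = ∑ j, αA j x * αB j y) :
    ∑ i, ∑ j,
        (lAct' Sinv (αB j) ((HopfAlgebra.antipode (R := k) : H →ₗ[k] H) (h1 i)))
          ⊗ₜ[k] (lAct' Sinv (αA j) (h2 i))
      = α 1 • ∑ i, ((HopfAlgebra.antipode (R := k) : H →ₗ[k] H) (h1 i)) ⊗ₜ[k] h2 i := by
  classical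
  set S : H →ₗ[k] H := (HopfAlgebra.antipode (R := k) : H →ₗ[k] H) with hS
  set r1 : ∀ i : ι, Coalgebra.Repr k (h1 i) (H × H) := fun i => ℛ k (h1 i) with hr1
  set r2 : ∀ i : ι, Coalgebra.Repr k (h2 i) (H × H) := fun i => ℛ k (h2 i) with hr2
  -- evaluation of the two actions
  have hA : ∀ (i : ι) (j : κ), lAct' Sinv (αB j) (S (h1 i))
      = ∑ a ∈ (r1 i).index, αB j ((r1 i).right a) • S ((r1 i).left a) := by
    intro i j
    have hcs : Coalgebra.comul (R := k) (S (h1 i))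
        = ∑ a ∈ (r1 i).index, S ((r1 i).right a) ⊗ₜ[k] S ((r1 i).left a) := by
      rw [hS, comul_S (h1 i), ← (r1 i).eq]
      simp only [map_sum, _root_.TensorProduct.map_tmul, _root_.TensorProduct.comm_tmul]
    rw [lAct'_eval Sinv (αB j) _ (r1 i).index _ _ hcs]
    refine Finset.sum_congr rfl fun a _ => ?_
    rw [hS1]
  have hB : ∀ (i : ι) (j : κ), lAct' Sinv (αA j) (h2 i)
      = ∑ b ∈ (r2 i).index, αA j (Sinv ((r2 i).left b)) • (r2 i).right b := by
    intro i j
    exact lAct'_eval Sinv (αA j) _ (r2 i).index _ _ (r2 i).eq.symm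
  -- the contraction maps
  set g : H ⊗[k] H →ₗ[k] k :=
    α ∘ₗ LinearMap.mul' k H ∘ₗ TensorProduct.map Sinv LinearMap.id ∘ₗ
      (TensorProduct.comm k H H).toLinearMap with hg
  set P : H ⊗[k] ((H ⊗[k] H) ⊗[k] H) →ₗ[k] H ⊗[k] H :=
    TensorProduct.map S LinearMap.id ∘ₗ
      LinearMap.lTensor H ((TensorProduct.lid k H).toLinearMap ∘ₗ
        LinearMap.rTensor H g) with hP
  have hPt : ∀ x y z w : H, P (x ⊗ₜ[k] ((y ⊗ₜ[k] z) ⊗ₜ[k] w))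
      = α (Sinv z * y) • (S x ⊗ₜ[k] w) := by
    intro x y z w
    simp only [hP, hg, LinearMap.coe_comp, LinearEquiv.coe_coe, Function.comp_apply,
      LinearMap.lTensor_tmul, LinearMap.rTensor_tmul, _root_.TensorProduct.comm_tmul, _root_.TensorProduct.map_tmul,
      LinearMap.id_coe, id_eq, LinearMap.mul'_apply, _root_.TensorProduct.lid_tmul, tmul_smul,
      map_smul]
  -- step 1 : LHS as a quadruple sum of P-values
  have step1 : (∑ i, ∑ j, (lAct' Sinv (αB j) (S (h1 i))) ⊗ₜ[k] (lAct' Sinv (αA j) (h2 i)))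
      = ∑ i, ∑ a ∈ (r1 i).index, ∑ b ∈ (r2 i).index,
        P ((r1 i).left a ⊗ₜ[k] (((r1 i).right a ⊗ₜ[k] (r2 i).left b) ⊗ₜ[k]
          (r2 i).right b)) := by
    refine Finset.sum_congr rfl fun i _ => ?_
    calc ∑ j, (lAct' Sinv (αB j) (S (h1 i))) ⊗ₜ[k] (lAct' Sinv (αA j) (h2 i))
        = ∑ j, ∑ a ∈ (r1 i).index, ∑ b ∈ (r2 i).index,
          (αA j (Sinv ((r2 i).left b)) * αB j ((r1 i).right a)) •
            (S ((r1 i).left a) ⊗ₜ[k] (r2 i).right b) := by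
          refine Finset.sum_congr rfl fun j _ => ?_
          rw [hA i j, hB i j, sum_tmul]
          refine Finset.sum_congr rfl fun a _ => ?_
          rw [tmul_sum]
          refine Finset.sum_congr rfl fun b _ => ?_
          rw [tmul_smul, smul_tmul', smul_smul, smul_tmul']
      _ = ∑ a ∈ (r1 i).index, ∑ b ∈ (r2 i).index,
          (∑ j, αA j (Sinv ((r2 i).left b)) * αB j ((r1 i).right a)) •
            (S ((r1 i).left a) ⊗ₜ[k] (r2 i).right b) := by
          rw [Finset.sum_comm]
          refine Finset.sum_congr rfl fun a _ => ?_
          rw [Finset.sum_comm]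
          refine Finset.sum_congr rfl fun b _ => ?_
          rw [Finset.sum_smul]
      _ = ∑ a ∈ (r1 i).index, ∑ b ∈ (r2 i).index,
          P ((r1 i).left a ⊗ₜ[k] (((r1 i).right a ⊗ₜ[k] (r2 i).left b) ⊗ₜ[k]
            (r2 i).right b)) := by
          refine Finset.sum_congr rfl fun a _ => Finset.sum_congr rfl fun b _ => ?_
          rw [hPt, ← hΔα]
  -- step 2 : transport along global coassociativity
  set ψ : H ⊗[k] H →ₗ[k] (H ⊗[k] H) ⊗[k] H :=
    (TensorProduct.assoc k H H H).symm.toLinearMap ∘ₗ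
      LinearMap.lTensor H (Coalgebra.comul (R := k)) with hψ
  have hψt : ∀ y z : H, ψ (y ⊗ₜ[k] z)
      = ((TensorProduct.assoc k H H H).symm.toLinearMap ∘ₗ
        LinearMap.lTensor H (Coalgebra.comul (R := k))) (y ⊗ₜ[k] z) := fun _ _ => by
    rw [hψ]
  have key := coassoc_sums h Finset.univ h1 h2 hΔ r1 r2
  have happ := congrArg (P ∘ₗ LinearMap.lTensor H ψ) key
  simp only [map_sum, LinearMap.coe_comp, Function.comp_apply, LinearMap.lTensor_tmul] at happ
  have hleft : ∑ i, ∑ a ∈ (r1 i).index,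
      P ((r1 i).left a ⊗ₜ[k] ψ ((r1 i).right a ⊗ₜ[k] h2 i))
      = ∑ i, ∑ a ∈ (r1 i).index, ∑ b ∈ (r2 i).index,
        P ((r1 i).left a ⊗ₜ[k] (((r1 i).right a ⊗ₜ[k] (r2 i).left b) ⊗ₜ[k]
          (r2 i).right b)) := by
    refine Finset.sum_congr rfl fun i _ => Finset.sum_congr rfl fun a _ => ?_
    rw [hψt, psi_eval ((r1 i).right a) (h2 i) (r2 i).index (r2 i).left (r2 i).right
      (r2 i).eq.symm, tmul_sum, map_sum]
  have hright : ∑ i, ∑ b ∈ (r2 i).index,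
      P (h1 i ⊗ₜ[k] ψ ((r2 i).left b ⊗ₜ[k] (r2 i).right b))
      = α 1 • ∑ i, S (h1 i) ⊗ₜ[k] h2 i := by
    have e2 : ∀ i : ι, ∑ b ∈ (r2 i).index,
        P (h1 i ⊗ₜ[k] ψ ((r2 i).left b ⊗ₜ[k] (r2 i).right b))
        = α 1 • (S (h1 i) ⊗ₜ[k] h2 i) := by
      intro i
      set rr : ∀ b : H × H, Coalgebra.Repr k ((r2 i).left b) (H × H) :=
        fun b => ℛ k ((r2 i).left b) with hrr
      set rr2 : ∀ b : H × H, Coalgebra.Repr k ((r2 i).right b) (H × H) :=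
        fun b => ℛ k ((r2 i).right b) with hrr2
      have inner_coassoc := coassoc_sums' (h2 i) (r2 i).index (r2 i).left
        (r2 i).right (r2 i).eq.symm rr rr2
      calc ∑ b ∈ (r2 i).index,
            P (h1 i ⊗ₜ[k] ψ ((r2 i).left b ⊗ₜ[k] (r2 i).right b))
          = ∑ b ∈ (r2 i).index, ∑ t ∈ (rr2 b).index,
            P (h1 i ⊗ₜ[k] (((r2 i).left b ⊗ₜ[k] (rr2 b).left t) ⊗ₜ[k]
              (rr2 b).right t)) := by
            refine Finset.sum_congr rfl fun b _ => ?_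
            rw [hψt, psi_eval ((r2 i).left b) ((r2 i).right b) (rr2 b).index (rr2 b).left
              (rr2 b).right (rr2 b).eq.symm, tmul_sum, map_sum]
        _ = ∑ b ∈ (r2 i).index, ∑ t ∈ (rr b).index,
            P (h1 i ⊗ₜ[k] (((rr b).left t ⊗ₜ[k] (rr b).right t) ⊗ₜ[k]
              (r2 i).right b)) := by
            have fAx : P (h1 i ⊗ₜ[k] (∑ b ∈ (r2 i).index, ∑ t ∈ (rr2 b).index,
                ((r2 i).left b ⊗ₜ[k] (rr2 b).left t) ⊗ₜ[k] (rr2 b).right t))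
                = ∑ b ∈ (r2 i).index, ∑ t ∈ (rr2 b).index,
                P (h1 i ⊗ₜ[k] (((r2 i).left b ⊗ₜ[k] (rr2 b).left t) ⊗ₜ[k]
                  (rr2 b).right t)) := by
              simp only [tmul_sum, map_sum]
            have fBx : P (h1 i ⊗ₜ[k] (∑ b ∈ (r2 i).index, ∑ t ∈ (rr b).index,
                ((rr b).left t ⊗ₜ[k] (rr b).right t) ⊗ₜ[k] (r2 i).right b))
                = ∑ b ∈ (r2 i).index, ∑ t ∈ (rr b).index,
                P (h1 i ⊗ₜ[k] (((rr b).left t ⊗ₜ[k] (rr b).right t) ⊗ₜ[k]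
                  (r2 i).right b)) := by
              simp only [tmul_sum, map_sum]
            rw [← fAx, ← fBx, inner_coassoc]
        _ = ∑ b ∈ (r2 i).index,
            (Coalgebra.counit (R := k) ((r2 i).left b) * α 1) •
              (S (h1 i) ⊗ₜ[k] (r2 i).right b) := by
            refine Finset.sum_congr rfl fun b _ => ?_
            have inner : ∑ t ∈ (rr b).index,
                α (Sinv ((rr b).right t) * (rr b).left t) =
                Coalgebra.counit (R := k) ((r2 i).left b) * α 1 := by
              rw [← map_sum, sum_Sinv_mul Sinv hS1 hS2 ((r2 i).left b) (rr b).index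
                (rr b).left (rr b).right (rr b).eq.symm, map_smul, smul_eq_mul]
            simp only [hPt]
            rw [← Finset.sum_smul, inner]
        _ = α 1 • (S (h1 i) ⊗ₜ[k] h2 i) := by
            have : ∀ b ∈ (r2 i).index,
                (Coalgebra.counit (R := k) ((r2 i).left b) * α 1) •
                  (S (h1 i) ⊗ₜ[k] (r2 i).right b)
                = α 1 • (S (h1 i) ⊗ₜ[k]
                    (Coalgebra.counit (R := k) ((r2 i).left b) • (r2 i).right b)) := by
              intro b _
              rw [tmul_smul, smul_smul, mul_comm]
            rw [Finset.sum_congr rfl this, ← Finset.smul_sum, ← tmul_sum,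
              sum_eps_right (h2 i) (r2 i).index (r2 i).left (r2 i).right (r2 i).eq.symm]
    rw [Finset.sum_congr rfl (fun i _ => e2 i), ← Finset.smul_sum]
  rw [step1, ← hleft, happ, hright]
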